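/- arXiv:1602.06451 — 2 statements merged into one kernel-verified Lean document; each statement's English description precedes it below -/
import Mathlib

section
/- Let $W$ be a Weyl group, $x < w$, $sw < w$, $x < sx$ for a simple reflection $s = s_\alpha$, and $\beta \in S(x, sw)$, i.e. $x \le sw s_\beta < sw$. Then $\beta \in S(x,w)$, i.e. $x \le w s_\beta < w$. -/
open CoxeterSystem

variable {B W : Type*} [Group W] {M : CoxeterMatrix B}

/-- The Bruhat order on a Coxeter group: the reflexive-transitive closure of the relation
`a ⋖ a * t` where `t` is a reflection and multiplication by `t` increases length. -/
def CoxeterSystem.bruhatLE (cs : CoxeterSystem M W) : W → W → Prop :=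
  Relation.ReflTransGen (fun a b => cs.length a < cs.length b ∧ ∃ t, cs.IsReflection t ∧ b = a * t)

/-- The strict Bruhat order. -/
def CoxeterSystem.bruhatLT (cs : CoxeterSystem M W) (x y : W) : Prop :=
  cs.bruhatLE x y ∧ x ≠ y

/-- The set `S(x,w)`: under the bijection `α ↦ s_α` between positive roots and reflections,
this is `{α ∈ Φ⁺ | x ≤ w s_α < w}`. -/
def CoxeterSystem.bnSet (cs : CoxeterSystem M W) (x w : W) : Set W :=
  {t | cs.IsReflection t ∧ cs.bruhatLE x (w * t) ∧ cs.bruhatLT (w * t) w}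

namespace CoxeterSystem

variable (cs : CoxeterSystem M W)

/-! ### Basic facts about the Bruhat order -/

lemma bruhatLE_length_le {u v : W} (h : cs.bruhatLE u v) : cs.length u ≤ cs.length v := by
  induction h with
  | refl => exact le_refl _
  | tail _ h ih => exact ih.trans (le_of_lt h.1)

lemma bruhatLT_length_lt {u v : W} (h : cs.bruhatLT u v) : cs.length u < cs.length v := by
  rcases Relation.ReflTransGen.cases_head h.1 with heq | ⟨c, hac, hcb⟩
  · exact absurd heq h.2
  · exact hac.1.trans_le (cs.bruhatLE_length_le hcb)

lemma bruhatLE_mul_right {w t : W} (ht : cs.IsReflection t)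
    (h : cs.length w < cs.length (w * t)) : cs.bruhatLE w (w * t) :=
  Relation.ReflTransGen.single ⟨h, t, ht, rfl⟩

lemma bruhatLE_of_mul_right {w t : W} (ht : cs.IsReflection t)
    (h : cs.length (w * t) < cs.length w) : cs.bruhatLE (w * t) w :=
  Relation.ReflTransGen.single ⟨h, t, ht, by rw [mul_assoc, ht.mul_self, mul_one]⟩

lemma bruhatLE_simple_mul (i : B) (w : W)
    (h : cs.length w < cs.length (cs.simple i * w)) : cs.bruhatLE w (cs.simple i * w) :=
  Relation.ReflTransGen.single ⟨h, w⁻¹ * cs.simple i * w,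
    by simpa using (cs.isReflection_simple i).conj w⁻¹, by group⟩

lemma bruhatLE_of_simple_mul (i : B) (w : W)
    (h : cs.length (cs.simple i * w) < cs.length w) : cs.bruhatLE (cs.simple i * w) w :=
  Relation.ReflTransGen.single ⟨h, w⁻¹ * cs.simple i * w,
    by simpa using (cs.isReflection_simple i).conj w⁻¹,
    by simp [mul_assoc, cs.simple_mul_simple_cancel_left]⟩

/-! ### The parity permutation representation (Tits' trick) -/

section Perm

variable [DecidableEq W]

/-- The involution `(t, ε) ↦ (s_i t s_i, ε + [t = s_i])` on `W × ZMod 2`. -/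
noncomputable def bnPerm (i : B) : Equiv.Perm (W × ZMod 2) :=
  Function.Involutive.toPerm
    (fun p => (cs.simple i * p.1 * cs.simple i, p.2 + if p.1 = cs.simple i then 1 else 0))
    (by
      rintro ⟨t, ε⟩
      have hiff : (cs.simple i * t * cs.simple i = cs.simple i) ↔ t = cs.simple i := by
        constructor
        · intro h
          have := congrArg (fun z => cs.simple i * z * cs.simple i) h
          simpa [mul_assoc, cs.simple_mul_simple_self] using this
        · rintro rfl
          simp [mul_assoc, cs.simple_mul_simple_self]
      have h2 : (1 + 1 : ZMod 2) = 0 := by decide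
      simp only [Prod.mk.injEq]
      constructor
      · simp [mul_assoc, cs.simple_mul_simple_self]
      · simp only [hiff]
        split_ifs with h
        · rw [add_assoc, h2, add_zero]
        · simp)

lemma bnPerm_apply (i : B) (t : W) (ε : ZMod 2) :
    cs.bnPerm i (t, ε) =
      (cs.simple i * t * cs.simple i, ε + if t = cs.simple i then 1 else 0) := rfl

lemma rightInvSeq_cons (j : B) (ω : List B) :
    cs.rightInvSeq (j :: ω) =
      ((cs.wordProd ω)⁻¹ * cs.simple j * cs.wordProd ω) :: cs.rightInvSeq ω := rfl

lemma prod_map_bnPerm (ω : List B) (t : W) (ε : ZMod 2) :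
    ((ω.map cs.bnPerm).prod) (t, ε) =
      (cs.wordProd ω * t * (cs.wordProd ω)⁻¹,
        ε + (((cs.rightInvSeq ω).count t : ℕ) : ZMod 2)) := by
  induction ω with
  | nil => simp
  | cons j ω ih =>
    rw [List.map_cons, List.prod_cons, Equiv.Perm.mul_apply, ih, bnPerm_apply]
    have hcond : ((cs.wordProd ω)⁻¹ * cs.simple j * cs.wordProd ω = t) ↔
        (cs.wordProd ω * t * (cs.wordProd ω)⁻¹ = cs.simple j) := by
      constructor
      · intro h; rw [← h]; group
      · intro h; rw [← h]; group
    have hfst : cs.simple j * (cs.wordProd ω * t * (cs.wordProd ω)⁻¹) * cs.simple j =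
        cs.wordProd (j :: ω) * t * (cs.wordProd (j :: ω))⁻¹ := by
      rw [cs.wordProd_cons]
      rw [mul_inv_rev, cs.inv_simple]
      group
    have hsnd : (((cs.rightInvSeq (j :: ω)).count t : ℕ) : ZMod 2) =
        (((cs.rightInvSeq ω).count t : ℕ) : ZMod 2)
          + if cs.wordProd ω * t * (cs.wordProd ω)⁻¹ = cs.simple j then 1 else 0 := by
      rw [cs.rightInvSeq_cons, List.count_cons]
      by_cases hc : (cs.wordProd ω)⁻¹ * cs.simple j * cs.wordProd ω = t
      · have hc' : cs.wordProd ω * t * (cs.wordProd ω)⁻¹ = cs.simple j := hcond.mp hc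
        simp [hc, hc']
      · have hc' : ¬ (cs.wordProd ω * t * (cs.wordProd ω)⁻¹ = cs.simple j) :=
          fun h => hc (hcond.mpr h)
        simp [hc, hc']
    rw [Prod.mk.injEq]
    constructor
    · exact hfst
    · rw [hsnd, add_assoc]

/-- The key conjugating elements appearing in the inversion sequence of an alternating word. -/
noncomputable def bnR (i i' : B) (k : ℕ) : W :=
  (cs.wordProd (alternatingWord i i' k))⁻¹ * cs.simple (if Even k then i' else i)
    * cs.wordProd (alternatingWord i i' k)

lemma bnR_eq (i i' : B) (k : ℕ) :
    cs.bnR i i' k = ((cs.simple i * cs.simple i') ^ ((k + 1) / 2))⁻¹ * cs.simple i'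
      * (cs.simple i * cs.simple i') ^ (k / 2) := by
  rcases Nat.even_or_odd k with he | ho
  · obtain ⟨e, rfl⟩ := he
    have h1 : (e + e) / 2 = e := by omega
    have h2 : (e + e + 1) / 2 = e := by omega
    rw [bnR, if_pos ⟨e, rfl⟩, cs.prod_alternatingWord_eq_mul_pow, if_pos ⟨e, rfl⟩, h1, h2,
      one_mul]
  · obtain ⟨e, rfl⟩ := ho
    have h1 : (2 * e + 1) / 2 = e := by omega
    have h2 : (2 * e + 1 + 1) / 2 = e + 1 := by omega
    have hnev : ¬ Even (2 * e + 1) := by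
      rw [Nat.even_iff]; omega
    rw [bnR, if_neg hnev, cs.prod_alternatingWord_eq_mul_pow, if_neg hnev, h1, h2]
    have hpinv : (cs.simple i * cs.simple i')⁻¹ = cs.simple i' * cs.simple i := by
      rw [mul_inv_rev, cs.inv_simple, cs.inv_simple]
    have hswap : ((cs.simple i * cs.simple i') ^ (e + 1))⁻¹ =
        ((cs.simple i * cs.simple i') ^ e)⁻¹ * (cs.simple i' * cs.simple i) := by
      rw [pow_succ', mul_inv_rev, hpinv]
    rw [hswap, mul_inv_rev, cs.inv_simple]
    group

lemma bnR_aux (p b : W) (hb : b * b = 1) (hpb : b * p * b = p⁻¹) (m : ℕ) (hpm : p ^ m = 1)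
    (A Bn u v : ℕ) (huv : u + v = m) :
    (p ^ (A + u))⁻¹ * b * p ^ (Bn + v) = (p ^ A)⁻¹ * b * p ^ Bn := by
  have hbinv : b⁻¹ = b := inv_eq_of_mul_eq_one_left hb
  have h2 : ∀ n : ℕ, b * p ^ n * b = (p ^ n)⁻¹ := by
    intro n
    induction n with
    | zero => simpa using hb
    | succ n ihn =>
      have : b * p ^ (n + 1) * b = (b * p ^ n * b) * (b * p * b) := by
        rw [pow_succ]
        have : b * b = 1 := hb
        calc b * (p ^ n * p) * b = b * p ^ n * (b * b) * p * b := by rw [this]; group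
          _ = (b * p ^ n * b) * (b * p * b) := by group
      rw [this, ihn, hpb, pow_succ, mul_inv_rev]
      rw [← mul_inv_rev, ← mul_inv_rev, ← pow_succ, ← pow_succ']
  have hpu : p ^ u = (p ^ v)⁻¹ := by
    apply eq_inv_of_mul_eq_one_left
    rw [← pow_add, huv, hpm]
  have hkey : b * p ^ v = p ^ u * b := by
    have := congrArg (fun z => z * b) (h2 v)
    calc b * p ^ v = b * p ^ v * (b * b) := by rw [hb, mul_one]
      _ = (b * p ^ v * b) * b := by group
      _ = (p ^ v)⁻¹ * b := by rw [h2 v]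
      _ = p ^ u * b := by rw [hpu]
  have hc : p ^ Bn * p ^ v = p ^ v * p ^ Bn := by
    rw [← pow_add, ← pow_add, Nat.add_comm]
  calc (p ^ (A + u))⁻¹ * b * p ^ (Bn + v)
      = (p ^ A * p ^ u)⁻¹ * b * (p ^ Bn * p ^ v) := by rw [pow_add, pow_add]
    _ = (p ^ A * p ^ u)⁻¹ * (b * p ^ v) * p ^ Bn := by rw [hc]; group
    _ = (p ^ A * p ^ u)⁻¹ * (p ^ u * b) * p ^ Bn := by rw [hkey]
    _ = (p ^ A)⁻¹ * b * p ^ Bn := by group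

lemma bnR_add_M (i i' : B) (k : ℕ) : cs.bnR i i' (k + M i i') = cs.bnR i i' k := by
  obtain ⟨u, hA'⟩ : ∃ u, (k + M i i' + 1) / 2 = (k + 1) / 2 + u :=
    ⟨(k + M i i' + 1) / 2 - (k + 1) / 2, by omega⟩
  obtain ⟨v, hB'⟩ : ∃ v, (k + M i i') / 2 = k / 2 + v :=
    ⟨(k + M i i') / 2 - k / 2, by omega⟩
  have huv : u + v = M i i' := by omega
  rw [bnR_eq, bnR_eq, hA', hB']
  apply bnR_aux
  · exact cs.simple_mul_simple_self i'
  · have hpinv : (cs.simple i * cs.simple i')⁻¹ = cs.simple i' * cs.simple i := by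
      rw [mul_inv_rev, cs.inv_simple, cs.inv_simple]
    rw [hpinv]
    simp [mul_assoc, cs.simple_mul_simple_self, cs.simple_mul_simple_cancel_left]
  · exact cs.simple_mul_simple_pow i i'
  · exact huv

lemma ris_alternatingWord (i i' : B) (N : ℕ) :
    cs.rightInvSeq (alternatingWord i i' N) = (List.range N).reverse.map (cs.bnR i i') := by
  induction N with
  | zero => rfl
  | succ N ih =>
    rw [alternatingWord_succ', cs.rightInvSeq_cons, ih, List.range_succ, List.reverse_append]
    simp only [List.reverse_singleton, List.singleton_append, List.map_cons]
    rfl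

lemma count_ris_alternatingWord_even (i i' : B) (t : W) :
    Even ((cs.rightInvSeq (alternatingWord i i' (2 * M i i'))).count t) := by
  rw [ris_alternatingWord]
  rw [List.map_reverse, List.count_reverse]
  rw [show 2 * M i i' = M i i' + M i i' by ring, List.range_add, List.map_append,
    List.count_append, List.map_map]
  have : (List.map (cs.bnR i i' ∘ fun x => M i i' + x) (List.range (M i i'))) =
      List.map (cs.bnR i i') (List.range (M i i')) := by
    apply List.map_congr_left
    intro k _
    simp only [Function.comp_apply]
    rw [Nat.add_comm, cs.bnR_add_M]
  rw [this]
  exact ⟨_, rfl⟩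

lemma prod_bnPerm_alternatingWord (i i' : B) (m : ℕ) :
    ((alternatingWord i i' (2 * m)).map cs.bnPerm).prod = (cs.bnPerm i * cs.bnPerm i') ^ m := by
  induction m with
  | zero => rfl
  | succ m ih =>
    have hlist : alternatingWord i i' (2 * (m + 1)) = i :: i' :: alternatingWord i i' (2 * m) := by
      rw [show 2 * (m + 1) = (2 * m + 1) + 1 by ring, alternatingWord_succ',
        alternatingWord_succ']
      rw [if_neg (by rw [Nat.even_iff]; omega), if_pos ⟨m, by ring⟩]
    rw [hlist, List.map_cons, List.map_cons, List.prod_cons, List.prod_cons, ih,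
      pow_succ' (cs.bnPerm i * cs.bnPerm i') m, mul_assoc]

lemma bnPerm_liftable : M.IsLiftable cs.bnPerm := by
  intro i i'
  rw [← cs.prod_bnPerm_alternatingWord]
  apply Equiv.ext
  rintro ⟨t, ε⟩
  rw [cs.prod_map_bnPerm]
  have hπ : cs.wordProd (alternatingWord i i' (2 * M i i')) = 1 := by
    rw [cs.prod_alternatingWord_eq_mul_pow, if_pos ⟨M i i', by ring⟩, one_mul,
      Nat.mul_div_cancel_left _ (by norm_num : 0 < 2), cs.simple_mul_simple_pow]
  obtain ⟨c, hc⟩ := cs.count_ris_alternatingWord_even i i' t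
  rw [hπ, hc]
  have : ((c + c : ℕ) : ZMod 2) = 0 := by
    push_cast
    rw [← two_mul]
    have h2 : (2 : ZMod 2) = 0 := by decide
    rw [h2, zero_mul]
  rw [this, add_zero]
  simp

/-- The parity homomorphism `W →* Perm (W × ZMod 2)`. -/
noncomputable def bnHom : W →* Equiv.Perm (W × ZMod 2) :=
  cs.lift ⟨cs.bnPerm, cs.bnPerm_liftable⟩

lemma bnHom_simple (i : B) : cs.bnHom (cs.simple i) = cs.bnPerm i :=
  cs.lift_apply_simple cs.bnPerm_liftable i

lemma bnHom_wordProd (ω : List B) (t : W) (ε : ZMod 2) :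
    cs.bnHom (cs.wordProd ω) (t, ε) =
      (cs.wordProd ω * t * (cs.wordProd ω)⁻¹,
        ε + (((cs.rightInvSeq ω).count t : ℕ) : ZMod 2)) := by
  have h : cs.bnHom (cs.wordProd ω) = (ω.map cs.bnPerm).prod := by
    rw [wordProd, MonoidHom.map_list_prod, List.map_map]
    congr 1
    apply List.map_congr_left
    intro j _
    simpa using cs.bnHom_simple j
  rw [h, cs.prod_map_bnPerm]

/-- The parity of the number of times `t` occurs in the right inversion sequence
of any word for `w`. -/
noncomputable def bnN (w t : W) : ZMod 2 := (cs.bnHom w (t, 0)).2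

lemma bnN_wordProd (ω : List B) (t : W) :
    cs.bnN (cs.wordProd ω) t = (((cs.rightInvSeq ω).count t : ℕ) : ZMod 2) := by
  rw [bnN, cs.bnHom_wordProd, zero_add]

lemma bnHom_apply (w t : W) (ε : ZMod 2) :
    cs.bnHom w (t, ε) = (w * t * w⁻¹, ε + cs.bnN w t) := by
  obtain ⟨ω, rfl⟩ := cs.wordProd_surjective w
  rw [cs.bnHom_wordProd, cs.bnN_wordProd]

lemma bnN_mul (u v t : W) :
    cs.bnN (u * v) t = cs.bnN v t + cs.bnN u (v * t * v⁻¹) := by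
  have h : cs.bnHom (u * v) (t, 0) = cs.bnHom u (cs.bnHom v (t, 0)) := by
    rw [map_mul, Equiv.Perm.mul_apply]
  rw [bnN, h, cs.bnHom_apply v t 0, cs.bnHom_apply u (v * t * v⁻¹) (0 + cs.bnN v t), zero_add]

lemma rightInvSeq_append (α β : List B) :
    cs.rightInvSeq (α ++ β) =
      (cs.rightInvSeq α).map (fun u => (cs.wordProd β)⁻¹ * u * cs.wordProd β)
        ++ cs.rightInvSeq β := by
  induction α with
  | nil => simp
  | cons a α ih =>
    rw [List.cons_append, cs.rightInvSeq_cons, cs.rightInvSeq_cons, ih, List.map_cons,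
      List.cons_append]
    congr 1
    rw [cs.wordProd_append, mul_inv_rev]
    group

lemma leftInvSeq_eq_map (ω : List B) :
    cs.leftInvSeq ω =
      (cs.rightInvSeq ω).map (fun u => cs.wordProd ω * u * (cs.wordProd ω)⁻¹) := by
  induction ω with
  | nil => simp
  | cons j ω ih =>
    have hl : cs.leftInvSeq (j :: ω) =
        cs.simple j :: (cs.leftInvSeq ω).map (MulAut.conj (cs.simple j)) := rfl
    rw [hl, cs.rightInvSeq_cons, List.map_cons, ih, List.map_map]
    congr 1
    · rw [cs.wordProd_cons, mul_inv_rev, cs.inv_simple]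
      simp [mul_assoc, cs.simple_mul_simple_cancel_left]
    · apply List.map_congr_left
      intro u _
      simp only [Function.comp_apply, MulAut.conj_apply]
      rw [cs.wordProd_cons, mul_inv_rev, cs.inv_simple]
      group

lemma bnN_self {t : W} (ht : cs.IsReflection t) : cs.bnN t t = 1 := by
  obtain ⟨w0, j, rfl⟩ := ht
  obtain ⟨ω₀, rfl⟩ := cs.wordProd_surjective w0
  set t := cs.wordProd ω₀ * cs.simple j * (cs.wordProd ω₀)⁻¹ with hT
  set ρ := ω₀ ++ j :: ω₀.reverse with hρ
  have hπρ : cs.wordProd ρ = t := by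
    rw [hρ, cs.wordProd_append, cs.wordProd_cons, cs.wordProd_reverse, hT, mul_assoc]
  have hrisρ : cs.rightInvSeq ρ =
      (cs.rightInvSeq ω₀).map
          (fun u => (cs.wordProd (j :: ω₀.reverse))⁻¹ * u * cs.wordProd (j :: ω₀.reverse))
        ++ (t :: cs.rightInvSeq ω₀.reverse) := by
    rw [hρ, cs.rightInvSeq_append, cs.rightInvSeq_cons, cs.wordProd_reverse]
    congr 2
    rw [hT, inv_inv]
  have hcount1 :
      ((cs.rightInvSeq ω₀).map
          (fun u => (cs.wordProd (j :: ω₀.reverse))⁻¹ * u * cs.wordProd (j :: ω₀.reverse))).count t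
        = (cs.rightInvSeq ω₀).count (cs.simple j) := by
    have hinj : Function.Injective
        (fun u => (cs.wordProd (j :: ω₀.reverse))⁻¹ * u * cs.wordProd (j :: ω₀.reverse)) := by
      intro a b hab
      simpa using mul_left_cancel (mul_right_cancel hab)
    have himg : (fun u => (cs.wordProd (j :: ω₀.reverse))⁻¹ * u * cs.wordProd (j :: ω₀.reverse))
        (cs.simple j) = t := by
      rw [cs.wordProd_cons, cs.wordProd_reverse, hT, mul_inv_rev, cs.inv_simple, inv_inv]
      simp [mul_assoc, cs.simple_mul_simple_self]
    rw [← himg, List.count_map_of_injective _ _ hinj]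
  have hcount3 : (cs.rightInvSeq ω₀.reverse).count t
      = (cs.rightInvSeq ω₀).count (cs.simple j) := by
    rw [cs.rightInvSeq_reverse, List.count_reverse, cs.leftInvSeq_eq_map]
    have hinj : Function.Injective
        (fun u => cs.wordProd ω₀ * u * (cs.wordProd ω₀)⁻¹) := by
      intro a b hab
      simpa using mul_left_cancel (mul_right_cancel hab)
    have himg : (fun u => cs.wordProd ω₀ * u * (cs.wordProd ω₀)⁻¹) (cs.simple j) = t := hT.symm
    rw [← himg, List.count_map_of_injective _ _ hinj]
  have : cs.bnN t t = (((cs.rightInvSeq ρ).count t : ℕ) : ZMod 2) := by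
    rw [← hπρ, cs.bnN_wordProd]
  rw [this, hrisρ, List.count_append, List.count_cons, hcount1, hcount3]
  simp only [beq_iff_eq, if_pos rfl]
  push_cast
  ring_nf
  set c := ((cs.rightInvSeq ω₀).count (cs.simple j) : ZMod 2)
  have h2 : (2 : ZMod 2) = 0 := by decide
  calc 1 + c * 2 = 1 + c * 0 := by rw [h2]
    _ = 1 := by ring

lemma mem_ris_of_bnN_one {w t : W} {ω : List B} (hω : cs.wordProd ω = w)
    (h : cs.bnN w t = 1) : t ∈ cs.rightInvSeq ω := by
  by_contra hmem
  have hc : (cs.rightInvSeq ω).count t = 0 := List.count_eq_zero.mpr hmem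
  rw [← hω, cs.bnN_wordProd, hc] at h
  simp at h

lemma length_mul_lt_of_bnN_one {w t : W} (h : cs.bnN w t = 1) :
    cs.length (w * t) < cs.length w := by
  obtain ⟨ω, hred, hw⟩ := cs.exists_reduced_word' w
  have hmem : t ∈ cs.rightInvSeq ω := cs.mem_ris_of_bnN_one hw.symm h
  have := (cs.isRightInversion_of_mem_rightInvSeq hred hmem).2
  rwa [← hw] at this

lemma bnN_eq_one_of_isRightInversion {w t : W} (ht : cs.IsReflection t)
    (hl : cs.length (w * t) < cs.length w) : cs.bnN w t = 1 := by
  by_contra h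
  have h0 : cs.bnN w t = 0 := by
    have : ∀ z : ZMod 2, z ≠ 1 → z = 0 := by decide
    exact this _ h
  have hwt : cs.bnN (w * t) t = 1 := by
    rw [cs.bnN_mul w t t]
    have htt : t * t * t⁻¹ = t := by rw [ht.mul_self, one_mul]; exact ht.inv
    rw [htt, cs.bnN_self ht, h0, add_zero]
  have := cs.length_mul_lt_of_bnN_one hwt
  rw [mul_assoc, ht.mul_self, mul_one] at this
  omega

/-- **Strong exchange property**. -/
lemma mem_ris_of_isRightInversion {ω : List B} {t : W} (ht : cs.IsReflection t)
    (hl : cs.length (cs.wordProd ω * t) < cs.length (cs.wordProd ω)) :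
    t ∈ cs.rightInvSeq ω :=
  cs.mem_ris_of_bnN_one rfl (cs.bnN_eq_one_of_isRightInversion ht hl)

end Perm

/-! ### The lifting property -/

lemma bruhat_lifting (i : B) : ∀ (n : ℕ) (u w : W), cs.length w ≤ n →
    cs.length (cs.simple i * w) < cs.length w → cs.bruhatLE u w →
    cs.length u < cs.length (cs.simple i * u) → cs.bruhatLE u (cs.simple i * w) := by
  classical
  intro n
  induction n with
  | zero =>
    intro u w hw hsw _ _
    omega
  | succ n ih =>
    intro u w hwn hsw hle hsu
    rcases Relation.ReflTransGen.cases_tail hle with heq | ⟨x, hux, hstep⟩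
    · subst heq
      omega
    · obtain ⟨hlt_xw, tt, htt, rfl⟩ := hstep
      have hassoc : cs.simple i * (x * tt) = (cs.simple i * x) * tt := by rw [mul_assoc]
      have hsw_eq : cs.length (cs.simple i * (x * tt)) + 1 = cs.length (x * tt) := by
        rcases cs.length_simple_mul (x * tt) i with h | h <;> omega
      have hxne := cs.length_simple_mul_ne x i
      rcases cs.length_simple_mul x i with hx | hx
      · -- ℓ(s i * x) = ℓ x + 1 (ascent at x)
        have hneq : cs.length (cs.simple i * (x * tt)) ≠ cs.length (cs.simple i * x) := by
          rw [hassoc]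
          exact htt.length_mul_left_ne (cs.simple i * x)
        rcases hneq.lt_or_gt with hgt | hlt
        · -- ℓ(s i * w) < ℓ(s i * x) : forced x = s i * w
          have hxcov : cs.length x + 1 = cs.length (x * tt) := by omega
          -- build a reduced word for w = x * tt starting with i
          obtain ⟨ω', hred', hw'⟩ := cs.exists_reduced_word' (cs.simple i * (x * tt))
          have hπω : cs.wordProd (i :: ω') = x * tt := by
            rw [cs.wordProd_cons, ← hw', cs.simple_mul_simple_cancel_left]
          have hlenω' : ω'.length = cs.length (cs.simple i * (x * tt)) := by
            rw [← hred', ← hw']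
          have hred : cs.IsReduced (i :: ω') := by
            rw [IsReduced, hπω, List.length_cons, hlenω', hsw_eq]
          have hxeq : x = (x * tt) * tt := by rw [mul_assoc, htt.mul_self, mul_one]
          have hmem : tt ∈ cs.rightInvSeq (i :: ω') := by
            apply cs.mem_ris_of_isRightInversion htt
            rw [hπω, ← hxeq]
            exact hlt_xw
          obtain ⟨k, hk, hkt⟩ := List.mem_iff_getElem.mp hmem
          have herase : cs.wordProd ((i :: ω').eraseIdx k) = x := by
            have h5 := cs.wordProd_mul_getD_rightInvSeq (i :: ω') k
            rw [List.getD_eq_getElem _ _ hk, hkt, hπω, ← hxeq] at h5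
            exact h5.symm
          match k with
          | 0 =>
            have hxeq2 : cs.simple i * (x * tt) = x := by
              rw [hw']
              exact herase
            rw [hxeq2]
            exact hux
          | (k' + 1) =>
            exfalso
            have herase' : cs.wordProd (i :: ω'.eraseIdx k') = x := herase
            have hsx_eq : cs.wordProd (ω'.eraseIdx k') = cs.simple i * x := by
              rw [← herase', cs.wordProd_cons, cs.simple_mul_simple_cancel_left]
            have hk' : k' < ω'.length := by
              have := hk
              rw [cs.length_rightInvSeq, List.length_cons] at this
              omega
            have hlb : cs.length (cs.simple i * x) ≤ (ω'.eraseIdx k').length := by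
              rw [← hsx_eq]
              exact cs.length_wordProd_le _
            have := List.length_eraseIdx_add_one hk'
            omega
        · -- ℓ(s i * x) < ℓ(s i * w) : go up through s i * x
          have h1 : cs.bruhatLE x (cs.simple i * x) := cs.bruhatLE_simple_mul i x (by omega)
          have h2 : cs.bruhatLE (cs.simple i * x) (cs.simple i * (x * tt)) := by
            rw [hassoc]
            exact cs.bruhatLE_mul_right htt (by rw [← hassoc]; omega)
          exact (hux.trans h1).trans h2
      · -- ℓ(s i * x) = ℓ x - 1 (descent at x)
        have hx' : cs.length (cs.simple i * x) + 1 = cs.length x := by omega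
        have hxn : cs.length x ≤ n := by omega
        have h1 : cs.bruhatLE u (cs.simple i * x) := ih u x hxn (by omega) hux hsu
        have h2 : cs.bruhatLE (cs.simple i * x) (cs.simple i * (x * tt)) := by
          rw [hassoc]
          exact cs.bruhatLE_mul_right htt (by rw [← hassoc]; omega)
        exact h1.trans h2

end CoxeterSystem

/-- If `x < w`, `sw < w`, `x < sx` for a simple reflection `s`, and `β ∈ S(x, sw)`
(i.e. `x ≤ sw s_β < sw`), then `β ∈ S(x, w)` (i.e. `x ≤ w s_β < w`). -/
theorem mem_bnSet_of_mem_bnSet_smul (cs : CoxeterSystem M W) (i : B) (x w t : W)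
    (hxw : cs.bruhatLT x w)
    (hsw : cs.bruhatLT (cs.simple i * w) w)
    (hsx : cs.bruhatLT x (cs.simple i * x))
    (ht : t ∈ cs.bnSet x (cs.simple i * w)) :
    t ∈ cs.bnSet x w := by
  obtain ⟨htrefl, hxv, hv⟩ := ht
  set v := cs.simple i * w * t with hvdef
  have hsv : cs.simple i * v = w * t := by
    rw [hvdef, ← mul_assoc, cs.simple_mul_simple_cancel_left]
  have hlv : cs.length v < cs.length (cs.simple i * w) := cs.bruhatLT_length_lt hv
  have hlsw : cs.length (cs.simple i * w) < cs.length w := cs.bruhatLT_length_lt hsw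
  have hlsx : cs.length x < cs.length (cs.simple i * x) := cs.bruhatLT_length_lt hsx
  have hne := cs.length_simple_mul_ne v i
  rcases cs.length_simple_mul v i with hd | hd
  · -- ℓ(s i * v) = ℓ v + 1 : w * t = s i * v > v
    have h1 : cs.bruhatLE v (cs.simple i * v) := cs.bruhatLE_simple_mul i v (by omega)
    have h2 : cs.bruhatLE x (w * t) := by
      rw [← hsv]
      exact hxv.trans h1
    have h3 : cs.length (w * t) < cs.length w := by
      rw [← hsv]
      omega
    refine ⟨htrefl, h2, cs.bruhatLE_of_mul_right htrefl h3, ?_⟩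
    intro heq
    rw [heq] at h3
    omega
  · -- ℓ(s i * v) = ℓ v - 1 : apply the lifting property
    have hd' : cs.length (cs.simple i * v) < cs.length v := by omega
    have h2 : cs.bruhatLE x (cs.simple i * v) :=
      cs.bruhat_lifting i (cs.length v) x v (le_refl _) hd' hxv hlsx
    rw [hsv] at h2
    have h3 : cs.length (w * t) < cs.length w := by
      rw [← hsv]
      omega
    refine ⟨htrefl, h2, cs.bruhatLE_of_mul_right htrefl h3, ?_⟩
    intro heq
    rw [heq] at h3
    omega
end

section
/- Let $W$ be a Weyl group, $\mathfrak{w} = s_1\cdots s_n$ a good word of $w$ for $x$ with $\lambda_{x,\mathfrak{w}} = (i_1,\ldots,i_d)$ and $i_1 > 1$. Then $S(s_1 x, s_1 w) = S(x,w)$, where $S(y,z) = \{\alpha \in \Phi^+ \mid y \le z s_\alpha < z\}$. -/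
open CoxeterSystem

variable {B W : Type*} [Group W] {M : CoxeterMatrix B}

/-- Delete from the word `ω` the letters at the (0-based) positions in `S`. -/
def delIdxs {B : Type*} (ω : List B) (S : List ℕ) : List B :=
  (((List.range ω.length).zip ω).filter (fun p => decide (p.1 ∉ S))).map Prod.snd

open Classical in
/-- `λ_{x,ω}`: the increasing list of (0-based) positions `i` such that
`x ≤ s_1 ⋯ ŝ_i ⋯ s_n` (the word with the letter at position `i` omitted). -/
noncomputable def CoxeterSystem.lambdaList (cs : CoxeterSystem M W) (x : W) (ω : List B) :
    List ℕ :=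
  (List.range ω.length).filter
    (fun i => decide (cs.bruhatLE x (cs.wordProd (ω.eraseIdx i))))

/-- `y` covers `x` in Bruhat order. -/
def CoxeterSystem.covers (cs : CoxeterSystem M W) (y x : W) : Prop :=
  cs.bruhatLT x y ∧ cs.length y = cs.length x + 1

/-- `L` is the label of a maximal chain `w = w_0 → w_1 → ⋯ → w_d = x` of the Bruhat interval
`[x, w]` with respect to the reduced word `ω` of `w`: `L` records the (0-based) positions
deleted at each covering step, `w_k` being obtained from `ω` by deleting the positions
`L.take k`. -/
def CoxeterSystem.IsMaxChainLabel (cs : CoxeterSystem M W) (ω : List B) (x : W)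
    (L : List ℕ) : Prop :=
  L.Nodup ∧ (∀ i ∈ L, i < ω.length) ∧
    (∀ k < L.length, cs.covers (cs.wordProd (delIdxs ω (L.take k)))
      (cs.wordProd (delIdxs ω (L.take (k + 1))))) ∧
    cs.wordProd (delIdxs ω L) = x

open List
open scoped Classical

namespace CoxeterSystem

variable (cs : CoxeterSystem M W)

local prefix:100 "σ" => cs.simple
local prefix:100 "π" => cs.wordProd
local prefix:100 "ℓ" => cs.length

private lemma conj_conj {a : W} (t : W) (h : a * a = 1) : a * (a * t * a) * a = t := by
  rw [show a * (a * t * a) * a = (a * a) * t * (a * a) by group, h, one_mul, mul_one]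

private lemma conj_eq_iff {a : W} (t : W) (h : a * a = 1) : a * t * a = a ↔ t = a := by
  constructor
  · intro h'
    have h2 : a * (a * t * a) * a = a * a * a := by rw [h']
    rw [conj_conj t h, h, one_mul] at h2
    exact h2
  · intro h'; rw [h', h, one_mul]



/-- The basic involution in the parity representation. -/
noncomputable def etaPerm (i : B) : Equiv.Perm (W × ZMod 2) where
  toFun p := (cs.simple i * p.1 * cs.simple i, p.2 + if p.1 = cs.simple i then 1 else 0)
  invFun p := (cs.simple i * p.1 * cs.simple i, p.2 + if p.1 = cs.simple i then 1 else 0)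
  left_inv p := by
    obtain ⟨t, z⟩ := p
    simp only [conj_conj t (cs.simple_mul_simple_self i),
      conj_eq_iff t (cs.simple_mul_simple_self i)]
    rw [add_assoc, ← two_mul]
    congr 1
    rcases eq_or_ne t (σ i) with h | h <;> simp [h, (by decide : (2:ZMod 2) = 0)]
  right_inv p := by
    obtain ⟨t, z⟩ := p
    simp only [conj_conj t (cs.simple_mul_simple_self i),
      conj_eq_iff t (cs.simple_mul_simple_self i)]
    rw [add_assoc, ← two_mul]
    congr 1
    rcases eq_or_ne t (σ i) with h | h <;> simp [h, (by decide : (2:ZMod 2) = 0)]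

lemma etaPerm_apply (i : B) (t : W) (z : ZMod 2) :
    cs.etaPerm i (t, z) = (σ i * t * σ i, z + if t = σ i then 1 else 0) := rfl

end CoxeterSystem

namespace CoxeterSystem

variable (cs : CoxeterSystem M W)

local prefix:100 "σ" => cs.simple
local prefix:100 "π" => cs.wordProd
local prefix:100 "ℓ" => cs.length

/-- Action of a product of `etaPerm`s along a word. -/
lemma prod_etaPerm_apply (ω : List B) (t : W) (z : ZMod 2) :
    (ω.map cs.etaPerm).prod (t, z) =
      (π ω * t * (π ω)⁻¹,
        z + ((cs.rightInvSeq ω).map (fun u => if t = u then (1 : ZMod 2) else 0)).sum) := by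
  induction ω generalizing z with
  | nil => simp [wordProd_nil, rightInvSeq]
  | cons i ω ih =>
    rw [List.map_cons, List.prod_cons, Equiv.Perm.mul_apply, ih, etaPerm_apply]
    have hcond : (π ω * t * (π ω)⁻¹ = σ i) ↔ (t = (π ω)⁻¹ * σ i * π ω) := by
      constructor
      · intro h
        rw [← h]; group
      · intro h
        rw [h]; group
    rw [show rightInvSeq cs (i :: ω) = ((π ω)⁻¹ * σ i * π ω) :: cs.rightInvSeq ω from rfl]
    rw [List.map_cons, List.sum_cons, wordProd_cons]
    refine Prod.ext ?_ ?_
    · show σ i * (π ω * t * (π ω)⁻¹) * σ i = σ i * π ω * t * (σ i * π ω)⁻¹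
      rw [mul_inv_rev, cs.inv_simple]; group
    · show z + _ + _ = z + (_ + _)
      simp only [hcond]
      ring

private lemma conj_eq_iff' (a b t : W) : a * t * a⁻¹ = b ↔ t = a⁻¹ * b * a := by
  constructor
  · intro h; rw [← h]; group
  · intro h; rw [h]; group

private lemma simple_mul_pow (i j : B) (m : ℕ) :
    σ j * (σ i * σ j) ^ m = ((σ i * σ j) ^ m)⁻¹ * σ j := by
  induction m with
  | zero => simp
  | succ m ih =>
    have hstep : σ j * (σ i * σ j) = (σ i * σ j)⁻¹ * σ j := by
      rw [mul_inv_rev, cs.inv_simple, cs.inv_simple, mul_assoc]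
    calc σ j * (σ i * σ j) ^ (m + 1)
        = (σ j * (σ i * σ j)) * (σ i * σ j) ^ m := by rw [pow_succ', ← mul_assoc]
      _ = (σ i * σ j)⁻¹ * (σ j * (σ i * σ j) ^ m) := by rw [hstep, mul_assoc]
      _ = (σ i * σ j)⁻¹ * (((σ i * σ j) ^ m)⁻¹ * σ j) := by rw [ih]
      _ = ((σ i * σ j) ^ (m + 1))⁻¹ * σ j := by
          rw [pow_succ, mul_inv_rev ((σ i * σ j)^m) (σ i * σ j), mul_assoc]

private lemma etaPerm_mul_pow_apply (i j : B) (m : ℕ) (t : W) (z : ZMod 2) :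
    ((cs.etaPerm i * cs.etaPerm j) ^ m) (t, z) =
      ((σ i * σ j) ^ m * t * ((σ i * σ j) ^ m)⁻¹,
        z + ∑ r ∈ Finset.range (2 * m), if t = σ j * (σ i * σ j) ^ r then (1 : ZMod 2) else 0) := by
  induction m generalizing z with
  | zero => simp
  | succ m ih =>
    rw [pow_succ', Equiv.Perm.mul_apply, ih, Equiv.Perm.mul_apply, etaPerm_apply, etaPerm_apply]
    have e1 : ((σ i * σ j)^m)⁻¹ * σ j * (σ i * σ j)^m = σ j * (σ i * σ j) ^ (2*m) := by
      rw [← cs.simple_mul_pow i j m, mul_assoc, ← pow_add, two_mul]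
    have e2 : ((σ i * σ j)^m)⁻¹ * (σ j * σ i * σ j) * (σ i * σ j)^m
        = σ j * (σ i * σ j) ^ (2*m+1) := by
      calc ((σ i * σ j)^m)⁻¹ * (σ j * σ i * σ j) * (σ i * σ j)^m
          = (((σ i * σ j)^m)⁻¹ * σ j) * ((σ i * σ j) * (σ i * σ j)^m) := by
            simp only [mul_assoc]
        _ = (σ j * (σ i * σ j)^m) * ((σ i * σ j) ^ (m+1)) := by
            rw [← cs.simple_mul_pow i j m, pow_succ']
        _ = σ j * (σ i * σ j) ^ (2*m+1) := by
            rw [mul_assoc, ← pow_add]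
            congr 2
            omega
    have hc1 : ((σ i * σ j) ^ m * t * ((σ i * σ j) ^ m)⁻¹ = σ j)
        ↔ (t = σ j * (σ i * σ j) ^ (2 * m)) := by
      rw [conj_eq_iff', e1]
    have hc2 : (σ j * ((σ i * σ j) ^ m * t * ((σ i * σ j) ^ m)⁻¹) * σ j = σ i)
        ↔ (t = σ j * (σ i * σ j) ^ (2 * m + 1)) := by
      have lhs_eq : σ j * ((σ i * σ j) ^ m * t * ((σ i * σ j) ^ m)⁻¹) * σ j
          = (σ j * (σ i * σ j) ^ m) * t * (σ j * (σ i * σ j) ^ m)⁻¹ := by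
        rw [mul_inv_rev, cs.inv_simple]
        simp only [mul_assoc]
      rw [lhs_eq, conj_eq_iff', mul_inv_rev, cs.inv_simple]
      rw [show ((σ i * σ j) ^ m)⁻¹ * σ j * σ i * (σ j * (σ i * σ j) ^ m)
          = ((σ i * σ j)^m)⁻¹ * (σ j * σ i * σ j) * (σ i * σ j)^m by simp only [mul_assoc], e2]
    refine Prod.ext ?_ ?_
    · show σ i * (σ j * ((σ i * σ j) ^ m * t * ((σ i * σ j) ^ m)⁻¹) * σ j) * σ i
        = (σ i * σ j) ^ (m+1) * t * ((σ i * σ j) ^ (m+1))⁻¹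
      rw [pow_succ' (σ i * σ j) m, mul_inv_rev ((σ i * σ j)) _, mul_inv_rev (σ i) (σ j),
        cs.inv_simple, cs.inv_simple]
      simp only [mul_assoc]
    · show z + _ + _ + _ = z + _
      rw [show 2 * (m + 1) = (2 * m + 1) + 1 by ring, Finset.sum_range_succ, Finset.sum_range_succ]
      simp only [hc1, hc2]
      ring

private lemma etaPerm_liftable : M.IsLiftable cs.etaPerm := by
  intro i j
  apply Equiv.ext
  rintro ⟨t, z⟩
  rw [etaPerm_mul_pow_apply, cs.simple_mul_simple_pow i j]
  simp only [Equiv.Perm.one_apply, one_mul, inv_one, mul_one]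
  refine Prod.ext rfl ?_
  show z + ∑ r ∈ Finset.range (2 * M i j), _ = z
  have hsplit : ∑ r ∈ Finset.range (2 * M i j),
        (if t = σ j * (σ i * σ j) ^ r then (1 : ZMod 2) else 0)
      = (∑ r ∈ Finset.range (M i j), if t = σ j * (σ i * σ j) ^ r then (1 : ZMod 2) else 0)
        + ∑ r ∈ Finset.range (M i j),
            (if t = σ j * (σ i * σ j) ^ (M i j + r) then (1 : ZMod 2) else 0) := by
    rw [two_mul, Finset.range_eq_Ico,
      ← Finset.sum_Ico_consecutive _ (Nat.zero_le (M i j)) (Nat.le_add_right (M i j) (M i j))]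
    congr 1
    · rw [Finset.range_eq_Ico]
    rw [Finset.sum_Ico_eq_sum_range]
    simp only [Nat.add_sub_cancel_left, Finset.range_eq_Ico]
  rw [hsplit]
  have heq : ∀ r : ℕ, (σ i * σ j) ^ (M i j + r) = (σ i * σ j) ^ r := by
    intro r
    rw [pow_add, cs.simple_mul_simple_pow i j, one_mul]
  simp only [heq]
  rw [CharTwo.add_self_eq_zero, add_zero]

/-- The parity (Tits) representation of the Coxeter group. -/
noncomputable def etaMap : W →* Equiv.Perm (W × ZMod 2) :=
  cs.lift ⟨cs.etaPerm, cs.etaPerm_liftable⟩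

lemma etaMap_simple (i : B) : cs.etaMap (σ i) = cs.etaPerm i :=
  cs.lift_apply_simple cs.etaPerm_liftable i

lemma etaMap_wordProd (ω : List B) (t : W) (z : ZMod 2) :
    cs.etaMap (π ω) (t, z) =
      (π ω * t * (π ω)⁻¹,
        z + ((cs.rightInvSeq ω).map (fun u => if t = u then (1 : ZMod 2) else 0)).sum) := by
  rw [← cs.prod_etaPerm_apply]
  congr 1
  rw [wordProd, map_list_prod]
  congr 1
  rw [List.map_map]
  apply List.map_congr_left
  intro i _
  exact cs.etaMap_simple i

/-- The parity cocycle. -/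
noncomputable def eta (w t : W) : ZMod 2 := (cs.etaMap w (t, 0)).2

lemma etaMap_apply (w t : W) (z : ZMod 2) :
    cs.etaMap w (t, z) = (w * t * w⁻¹, z + cs.eta w t) := by
  obtain ⟨ω, -, rfl⟩ := cs.exists_reduced_word' w
  rw [cs.etaMap_wordProd]
  unfold eta
  rw [cs.etaMap_wordProd, zero_add]

lemma eta_wordProd (ω : List B) (t : W) :
    cs.eta (π ω) t = ((cs.rightInvSeq ω).map (fun u => if t = u then (1 : ZMod 2) else 0)).sum := by
  unfold eta
  rw [cs.etaMap_wordProd, zero_add]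

end CoxeterSystem

namespace CoxeterSystem

variable (cs : CoxeterSystem M W)

local prefix:100 "σ" => cs.simple
local prefix:100 "π" => cs.wordProd
local prefix:100 "ℓ" => cs.length

lemma eta_refl_self {t : W} (ht : cs.IsReflection t) : cs.eta t t = 1 := by
  obtain ⟨w, i, rfl⟩ := ht
  obtain ⟨ω, -, rfl⟩ := cs.exists_reduced_word' w
  induction ω with
  | nil =>
    simp only [wordProd_nil, one_mul, inv_one, mul_one]
    unfold eta
    rw [cs.etaMap_simple, etaPerm_apply]
    simp
  | cons k ω ih =>
    have hconj : π (k :: ω) * σ i * (π (k :: ω))⁻¹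
        = σ k * (π ω * σ i * (π ω)⁻¹) * σ k := by
      rw [wordProd_cons, mul_inv_rev, cs.inv_simple]
      simp only [mul_assoc]
    rw [hconj]
    set t' := π ω * σ i * (π ω)⁻¹ with ht'
    unfold eta
    have hmm : cs.etaMap (σ k * t' * σ k) = cs.etaMap (σ k) * cs.etaMap t' * cs.etaMap (σ k) := by
      rw [map_mul, map_mul]
    have s1 : cs.etaPerm k (σ k * t' * σ k, (0:ZMod 2))
        = (t', if t' = σ k then 1 else 0) := by
      rw [etaPerm_apply, conj_conj t' (cs.simple_mul_simple_self k)]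
      refine Prod.ext rfl ?_
      show (0 : ZMod 2) + _ = _
      rw [zero_add]
      simp only [conj_eq_iff t' (cs.simple_mul_simple_self k)]
    have s2 : cs.etaMap t' (t', (if t' = σ k then (1:ZMod 2) else 0))
        = (t', (if t' = σ k then 1 else 0) + 1) := by
      rw [cs.etaMap_apply, mul_inv_cancel_right, ih]
    have s3 : cs.etaPerm k (t', ((if t' = σ k then (1:ZMod 2) else 0) + 1))
        = (σ k * t' * σ k, ((if t' = σ k then 1 else 0) + 1) + (if t' = σ k then 1 else 0)) := by
      rw [etaPerm_apply]
    rw [hmm, Equiv.Perm.mul_apply, Equiv.Perm.mul_apply, cs.etaMap_simple, s1, s2, s3]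
    show ((if t' = σ k then (1:ZMod 2) else 0) + 1) + (if t' = σ k then 1 else 0) = 1
    rcases eq_or_ne t' (σ k) with h | h
    · simp only [h, if_pos rfl]
      decide
    · simp [h]

lemma mem_rightInvSeq_of_eta_eq_one (ω : List B) {t : W} (h : cs.eta (π ω) t = 1) :
    t ∈ cs.rightInvSeq ω := by
  by_contra h'
  rw [cs.eta_wordProd] at h
  have : ((cs.rightInvSeq ω).map (fun u => if t = u then (1 : ZMod 2) else 0)).sum = 0 := by
    apply List.sum_eq_zero
    intro x hx
    obtain ⟨u, hu, rfl⟩ := List.mem_map.mp hx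
    have : t ≠ u := fun he => h' (he ▸ hu)
    simp [this]
  rw [this] at h
  exact (by decide : (0 : ZMod 2) ≠ 1) h

lemma isRightInversion_of_eta {w t : W} (ht : cs.IsReflection t) (h : cs.eta w t = 1) :
    ℓ (w * t) < ℓ w := by
  obtain ⟨ω, hred, rfl⟩ := cs.exists_reduced_word' w
  exact (cs.isRightInversion_of_mem_rightInvSeq hred
    (cs.mem_rightInvSeq_of_eta_eq_one ω h)).2

lemma eta_mul_refl (w : W) {t : W} (ht : cs.IsReflection t) :
    cs.eta (w * t) t = 1 + cs.eta w t := by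
  unfold eta
  rw [map_mul, Equiv.Perm.mul_apply, cs.etaMap_apply t t 0, zero_add, cs.eta_refl_self ht,
    mul_inv_cancel_right, cs.etaMap_apply]
  rfl

lemma eta_eq_one_of_isRightInversion {w t : W} (ht : cs.IsReflection t)
    (h : ℓ (w * t) < ℓ w) : cs.eta w t = 1 := by
  rcases (by decide : ∀ a : ZMod 2, a = 0 ∨ a = 1) (cs.eta w t) with h0 | h1
  · exfalso
    have h2 : cs.eta (w * t) t = 1 := by rw [cs.eta_mul_refl w ht, h0, add_zero]
    have h3 : ℓ (w * t * t) < ℓ (w * t) := cs.isRightInversion_of_eta ht h2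
    rw [mul_assoc, ht.mul_self, mul_one] at h3
    omega
  · exact h1

/-- The strong exchange property. -/
theorem strongExchangeProperty (ω : List B) {t : W} (ht : cs.IsReflection t)
    (hl : ℓ (π ω * t) < ℓ (π ω)) :
    ∃ j < ω.length, π (ω.eraseIdx j) = π ω * t := by
  have h1 : cs.eta (π ω) t = 1 := cs.eta_eq_one_of_isRightInversion ht hl
  have h2 : t ∈ cs.rightInvSeq ω := cs.mem_rightInvSeq_of_eta_eq_one ω h1
  obtain ⟨j, hj, hget⟩ := List.mem_iff_getElem.mp h2
  rw [cs.length_rightInvSeq] at hj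
  refine ⟨j, hj, ?_⟩
  rw [← cs.wordProd_mul_getD_rightInvSeq ω j]
  congr 1
  rw [List.getD_eq_getElem _ 1 (by rw [cs.length_rightInvSeq]; exact hj), hget]

end CoxeterSystem


namespace CoxeterSystem

variable (cs : CoxeterSystem M W)

local prefix:100 "σ" => cs.simple
local prefix:100 "π" => cs.wordProd
local prefix:100 "ℓ" => cs.length

@[refl] lemma bruhatLE.refl (w : W) : cs.bruhatLE w w := Relation.ReflTransGen.refl

lemma bruhatLE.trans {x y z : W} (h1 : cs.bruhatLE x y) (h2 : cs.bruhatLE y z) :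
    cs.bruhatLE x z := Relation.ReflTransGen.trans h1 h2

lemma bruhatLE_of_step {x : W} {t : W} (ht : cs.IsReflection t)
    (hl : ℓ x < ℓ (x * t)) : cs.bruhatLE x (x * t) :=
  Relation.ReflTransGen.single ⟨hl, t, ht, rfl⟩

lemma bruhatLE_of_step' {x : W} {t : W} (ht : cs.IsReflection t)
    (hl : ℓ (x * t) < ℓ x) : cs.bruhatLE (x * t) x := by
  have := cs.bruhatLE_of_step (x := x * t) ht (by rwa [mul_assoc, ht.mul_self, mul_one])
  rwa [mul_assoc, ht.mul_self, mul_one] at this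

lemma bruhatLE.length_le {x y : W} (h : cs.bruhatLE x y) : ℓ x ≤ ℓ y := by
  induction h with
  | refl => exact le_refl _
  | tail _ hstep ih => exact ih.trans (le_of_lt hstep.1)

lemma bruhatLE.length_lt {x y : W} (h : cs.bruhatLE x y) (hne : x ≠ y) : ℓ x < ℓ y := by
  rcases Relation.ReflTransGen.cases_tail h with h' | ⟨c, hc, hstep⟩
  · exact absurd h'.symm hne
  · exact lt_of_le_of_lt (bruhatLE.length_le cs hc) hstep.1

lemma bruhatLT_iff {x y : W} : cs.bruhatLT x y ↔ cs.bruhatLE x y ∧ ℓ x < ℓ y := by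
  constructor
  · rintro ⟨h, hne⟩
    exact ⟨h, bruhatLE.length_lt cs h hne⟩
  · rintro ⟨h, hlt⟩
    exact ⟨h, fun he => by rw [he] at hlt; omega⟩

lemma bruhatLE.inv {x y : W} (h : cs.bruhatLE x y) : cs.bruhatLE x⁻¹ y⁻¹ := by
  induction h with
  | refl => exact Relation.ReflTransGen.refl
  | tail _ hstep ih =>
    rename_i b c _
    obtain ⟨hl, t, ht, rfl⟩ := hstep
    refine Relation.ReflTransGen.tail ih ⟨?_, b * t * b⁻¹, ht.conj b, ?_⟩
    · rwa [cs.length_inv, cs.length_inv]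
    · rw [mul_inv_rev, ht.inv]
      group

lemma mul_simple_simple (v : W) (i : B) : v * σ i * σ i = v := by
  rw [mul_assoc, cs.simple_mul_simple_self, mul_one]

lemma refl_conj_simple {t : W} (ht : cs.IsReflection t) (i : B) :
    cs.IsReflection (σ i * t * σ i) := by
  have := ht.conj (σ i)
  rwa [cs.inv_simple] at this

lemma conj_step (i : B) (t v' : W) : (v' * σ i) * (σ i * t * σ i) = (v' * t) * σ i := by
  calc (v' * σ i) * (σ i * t * σ i) = v' * (σ i * σ i) * (t * σ i) := by simp only [mul_assoc]
    _ = (v' * t) * σ i := by rw [cs.simple_mul_simple_self, mul_one, ← mul_assoc]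

private lemma bruhat_lifting_aux : ∀ n : ℕ, ∀ v : W, ℓ v < n →
    ((∀ i : B, ℓ (v * σ i) < ℓ v → ∀ u : W, cs.bruhatLE u v →
      (cs.bruhatLE (u * σ i) v ∧
       (ℓ (u * σ i) < ℓ u → cs.bruhatLE (u * σ i) (v * σ i)) ∧
       (ℓ u < ℓ (u * σ i) → cs.bruhatLE u (v * σ i))))
    ∧ (∀ i : B, ℓ v < ℓ (v * σ i) → ∀ u : W, cs.bruhatLE u v → ℓ u < ℓ (u * σ i) →
        cs.bruhatLE (u * σ i) (v * σ i))) := by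
  intro n
  induction n using Nat.strong_induction_on with
  | _ n IH =>
  intro v hv
  constructor
  · -- the lifting property `L`
    intro i hvi u huv
    rcases Relation.ReflTransGen.cases_tail huv with heq | ⟨v', hle, hstep⟩
    · -- u = v
      subst heq
      refine ⟨cs.bruhatLE_of_step' (cs.isReflection_simple i) hvi, fun _ => ?_, fun h => ?_⟩
      · exact bruhatLE.refl cs _
      · omega
    · obtain ⟨hlv', t, ht, hveq⟩ := hstep
      subst hveq
      -- abbreviations
      have hstep_v'v : cs.bruhatLE v' (v' * t) := cs.bruhatLE_of_step ht hlv'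
      rcases (cs.length_mul_simple_ne v' i).lt_or_gt with hdown | hup
      · -- ℓ (v' σ i) < ℓ v'
        obtain ⟨T1, T2, T3⟩ := (IH (ℓ (v' * t)) hv v' hlv').1 i hdown u hle
        have hS : cs.bruhatLE (v' * σ i) ((v' * t) * σ i) := by
          rw [← cs.conj_step i t v']
          exact cs.bruhatLE_of_step (cs.refl_conj_simple ht i) (by
            rw [cs.conj_step i t v']
            have h1 : ℓ (v' * σ i) + 1 = ℓ v' := by
              rcases cs.length_mul_simple v' i with h | h <;> omega
            have h2 : ℓ ((v' * t) * σ i) + 1 = ℓ (v' * t) := by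
              rcases cs.length_mul_simple (v' * t) i with h | h <;> omega
            omega)
        refine ⟨bruhatLE.trans cs T1 hstep_v'v, fun h => ?_, fun h => ?_⟩
        · exact bruhatLE.trans cs (T2 h) hS
        · exact bruhatLE.trans cs (T3 h) hS
      · -- ℓ v' < ℓ (v' σ i) : use strong exchange
        obtain ⟨τ, hτred, hτ⟩ := cs.exists_reduced_word' ((v' * t) * σ i)
        have hπω : π (τ ++ [i]) = v' * t := by
          rw [wordProd_append, wordProd_singleton, ← hτ, cs.mul_simple_simple]
        have hvt : (v' * t) * t = v' := by rw [mul_assoc, ht.mul_self, mul_one]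
        obtain ⟨j, hj, hjeq⟩ := cs.strongExchangeProperty (τ ++ [i]) ht
          (by rw [hπω, hvt]; exact hlv')
        rw [hπω, hvt] at hjeq
        rw [List.length_append, List.length_singleton] at hj
        have hτlen : τ.length = ℓ ((v' * t) * σ i) := by rw [hτ]; exact hτred.symm
        rcases eq_or_lt_of_le (Nat.lt_succ_iff.mp hj) with hjlast | hjlt
        · -- j = τ.length : v' = v * σ i
          have hv'eq : v' = (v' * t) * σ i := by
            conv_lhs => rw [← hjeq]
            rw [hjlast, show (τ ++ [i]).eraseIdx τ.length = τ by
              simp [List.eraseIdx_eq_take_drop_succ], ← hτ]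
          -- now u ≤ v' = vσi
          have huvs : cs.bruhatLE u ((v' * t) * σ i) := hv'eq ▸ hle
          have hvs_v : cs.bruhatLE ((v' * t) * σ i) (v' * t) :=
            cs.bruhatLE_of_step' (cs.isReflection_simple i) hvi
          refine ⟨?_, fun h => ?_, fun h => ?_⟩
          · rcases (cs.length_mul_simple_ne u i).lt_or_gt with hud | huu
            · exact bruhatLE.trans cs (bruhatLE.trans cs
                (cs.bruhatLE_of_step' (cs.isReflection_simple i) hud) huvs) hvs_v
            · have := (IH (ℓ (v' * t)) hv ((v' * t) * σ i) hvi).2 i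
                (by rw [cs.mul_simple_simple]; exact hvi) u huvs huu
              rwa [cs.mul_simple_simple] at this
          · exact bruhatLE.trans cs (cs.bruhatLE_of_step' (cs.isReflection_simple i) h) huvs
          · exact huvs
        · -- j < τ.length
          have herase : (τ ++ [i]).eraseIdx j = τ.eraseIdx j ++ [i] :=
            List.eraseIdx_append_of_lt_length hjlt [i]
          have hv's : v' * σ i = π (τ.eraseIdx j) := by
            rw [← cs.mul_simple_simple (π (τ.eraseIdx j)) i]
            congr 1
            rw [← wordProd_singleton, ← wordProd_append, ← herase, hjeq]
          have hlt : ℓ (v' * σ i) < ℓ ((v' * t) * σ i) := by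
            have h1 : ℓ (v' * σ i) ≤ (τ.eraseIdx j).length := by
              rw [hv's]; exact cs.length_wordProd_le _
            have h2 : (τ.eraseIdx j).length = τ.length - 1 := by
              rw [List.length_eraseIdx]
              simp [hjlt]
            have h3 : (0:ℕ) < τ.length := lt_of_le_of_lt (Nat.zero_le j) hjlt
            omega
          have S1 : cs.bruhatLE (v' * σ i) ((v' * t) * σ i) := by
            rw [← cs.conj_step i t v']
            exact cs.bruhatLE_of_step (cs.refl_conj_simple ht i)
              (by rw [cs.conj_step i t v']; exact hlt)
          have S2 : cs.bruhatLE v' (v' * σ i) :=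
            cs.bruhatLE_of_step (cs.isReflection_simple i) hup
          have hM' := (IH (ℓ (v' * t)) hv v' hlv').2 i hup u hle
          refine ⟨?_, fun h => ?_, fun h => ?_⟩
          · rcases (cs.length_mul_simple_ne u i).lt_or_gt with hud | huu
            · exact bruhatLE.trans cs (cs.bruhatLE_of_step' (cs.isReflection_simple i) hud)
                (bruhatLE.trans cs hle hstep_v'v)
            · exact bruhatLE.trans cs (bruhatLE.trans cs (hM' huu) S1)
                (cs.bruhatLE_of_step' (cs.isReflection_simple i) hvi)
          · exact bruhatLE.trans cs (bruhatLE.trans cs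
              (cs.bruhatLE_of_step' (cs.isReflection_simple i) h) (bruhatLE.trans cs hle S2)) S1
          · exact bruhatLE.trans cs
              (cs.bruhatLE_of_step (cs.isReflection_simple i) h) (bruhatLE.trans cs (hM' h) S1)
  · -- the monotonicity property `M'`
    intro i hvi u huv hui
    rcases Relation.ReflTransGen.cases_tail huv with heq | ⟨v', hle, hstep⟩
    · subst heq
      exact bruhatLE.refl cs _
    · obtain ⟨hlv', t, ht, hveq⟩ := hstep
      subst hveq
      rcases (cs.length_mul_simple_ne v' i).lt_or_gt with hdown | hup
      · -- ℓ (v' σ i) < ℓ v'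
        have hT3 := ((IH (ℓ (v' * t)) hv v' hlv').1 i hdown u hle).2.2 hui
        have hM' := (IH (ℓ (v' * t)) hv (v' * σ i)
            (lt_trans hdown hlv')).2 i
            (by rw [cs.mul_simple_simple]; exact hdown) u hT3 hui
        rw [cs.mul_simple_simple] at hM'
        exact bruhatLE.trans cs hM'
          (bruhatLE.trans cs (cs.bruhatLE_of_step ht hlv')
            (cs.bruhatLE_of_step (cs.isReflection_simple i) hvi))
      · -- ℓ v' < ℓ (v' σ i)
        have hM' := (IH (ℓ (v' * t)) hv v' hlv').2 i hup u hle hui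
        have hS : cs.bruhatLE (v' * σ i) ((v' * t) * σ i) := by
          rw [← cs.conj_step i t v']
          refine cs.bruhatLE_of_step (cs.refl_conj_simple ht i) ?_
          rw [cs.conj_step i t v']
          have h1 : ℓ (v' * σ i) = ℓ v' + 1 := by
            rcases cs.length_mul_simple v' i with h | h <;> omega
          have h2 : ℓ ((v' * t) * σ i) = ℓ (v' * t) + 1 := by
            rcases cs.length_mul_simple (v' * t) i with h | h <;> omega
          omega
        exact bruhatLE.trans cs hM' hS

lemma bruhat_descent_mul_le {v : W} (i : B) (hvi : ℓ (v * σ i) < ℓ v) {u : W}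
    (hu : cs.bruhatLE u v) : cs.bruhatLE (u * σ i) v :=
  ((cs.bruhat_lifting_aux (ℓ v + 1) v (Nat.lt_succ_self _)).1 i hvi u hu).1

lemma bruhat_descent_mul_le_mul {v : W} (i : B) (hvi : ℓ (v * σ i) < ℓ v) {u : W}
    (hu : cs.bruhatLE u v) (hui : ℓ (u * σ i) < ℓ u) :
    cs.bruhatLE (u * σ i) (v * σ i) :=
  ((cs.bruhat_lifting_aux (ℓ v + 1) v (Nat.lt_succ_self _)).1 i hvi u hu).2.1 hui

lemma bruhat_descent_le_mul {v : W} (i : B) (hvi : ℓ (v * σ i) < ℓ v) {u : W}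
    (hu : cs.bruhatLE u v) (hui : ℓ u < ℓ (u * σ i)) :
    cs.bruhatLE u (v * σ i) :=
  ((cs.bruhat_lifting_aux (ℓ v + 1) v (Nat.lt_succ_self _)).1 i hvi u hu).2.2 hui

lemma bruhat_ascent_mul_le_mul {v : W} (i : B) (hvi : ℓ v < ℓ (v * σ i)) {u : W}
    (hu : cs.bruhatLE u v) (hui : ℓ u < ℓ (u * σ i)) :
    cs.bruhatLE (u * σ i) (v * σ i) :=
  (cs.bruhat_lifting_aux (ℓ v + 1) v (Nat.lt_succ_self _)).2 i hvi u hu hui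

lemma bruhat_descent_of_le_mul {v : W} (i : B) (hvi : ℓ (v * σ i) < ℓ v) {u : W}
    (hu : cs.bruhatLE u (v * σ i)) : cs.bruhatLE (u * σ i) v := by
  rcases (cs.length_mul_simple_ne u i).lt_or_gt with hud | huu
  · exact bruhatLE.trans cs (cs.bruhatLE_of_step' (cs.isReflection_simple i) hud)
      (bruhatLE.trans cs hu (cs.bruhatLE_of_step' (cs.isReflection_simple i) hvi))
  · have := cs.bruhat_ascent_mul_le_mul (v := v * σ i) i
      (by rw [cs.mul_simple_simple]; exact hvi) hu huu
    rwa [cs.mul_simple_simple] at this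

lemma bruhatLE_inv_iff {u v : W} : cs.bruhatLE u⁻¹ v⁻¹ ↔ cs.bruhatLE u v := by
  constructor
  · intro h
    have := bruhatLE.inv cs h
    rwa [inv_inv, inv_inv] at this
  · exact bruhatLE.inv cs

lemma length_inv_mul_simple (v : W) (i : B) : ℓ (v⁻¹ * σ i) = ℓ (σ i * v) := by
  rw [← cs.length_inv (v⁻¹ * σ i), mul_inv_rev, cs.inv_simple, inv_inv]

lemma inv_mul_simple_inv (u : W) (i : B) : (u⁻¹ * σ i)⁻¹ = σ i * u := by
  rw [mul_inv_rev, cs.inv_simple, inv_inv]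

lemma bruhat_left_descent_mul_le {v : W} (i : B) (hvi : ℓ (σ i * v) < ℓ v) {u : W}
    (hu : cs.bruhatLE u v) : cs.bruhatLE (σ i * u) v := by
  rw [← cs.bruhatLE_inv_iff, ← cs.inv_mul_simple_inv u i, inv_inv]
  exact cs.bruhat_descent_mul_le i
    (by rw [cs.length_inv_mul_simple, cs.length_inv]; exact hvi)
    ((cs.bruhatLE_inv_iff).mpr hu)

lemma bruhat_left_descent_mul_le_mul {v : W} (i : B) (hvi : ℓ (σ i * v) < ℓ v) {u : W}
    (hu : cs.bruhatLE u v) (hui : ℓ (σ i * u) < ℓ u) :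
    cs.bruhatLE (σ i * u) (σ i * v) := by
  rw [← cs.bruhatLE_inv_iff, ← cs.inv_mul_simple_inv u i, ← cs.inv_mul_simple_inv v i,
    inv_inv, inv_inv]
  exact cs.bruhat_descent_mul_le_mul i
    (by rw [cs.length_inv_mul_simple, cs.length_inv]; exact hvi)
    ((cs.bruhatLE_inv_iff).mpr hu)
    (by rw [cs.length_inv_mul_simple, cs.length_inv]; exact hui)

lemma bruhat_left_descent_le_mul {v : W} (i : B) (hvi : ℓ (σ i * v) < ℓ v) {u : W}
    (hu : cs.bruhatLE u v) (hui : ℓ u < ℓ (σ i * u)) :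
    cs.bruhatLE u (σ i * v) := by
  rw [← cs.bruhatLE_inv_iff, ← cs.inv_mul_simple_inv v i, inv_inv]
  exact cs.bruhat_descent_le_mul i
    (by rw [cs.length_inv_mul_simple, cs.length_inv]; exact hvi)
    ((cs.bruhatLE_inv_iff).mpr hu)
    (by rw [cs.length_inv_mul_simple, cs.length_inv]; exact hui)

lemma bruhat_left_ascent_mul_le_mul {v : W} (i : B) (hvi : ℓ v < ℓ (σ i * v)) {u : W}
    (hu : cs.bruhatLE u v) (hui : ℓ u < ℓ (σ i * u)) :
    cs.bruhatLE (σ i * u) (σ i * v) := by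
  rw [← cs.bruhatLE_inv_iff, ← cs.inv_mul_simple_inv u i, ← cs.inv_mul_simple_inv v i,
    inv_inv, inv_inv]
  exact cs.bruhat_ascent_mul_le_mul i
    (by rw [cs.length_inv_mul_simple, cs.length_inv]; exact hvi)
    ((cs.bruhatLE_inv_iff).mpr hu)
    (by rw [cs.length_inv_mul_simple, cs.length_inv]; exact hui)

lemma bruhat_left_descent_of_le_mul {v : W} (i : B) (hvi : ℓ (σ i * v) < ℓ v) {u : W}
    (hu : cs.bruhatLE u (σ i * v)) : cs.bruhatLE (σ i * u) v := by
  rw [← cs.bruhatLE_inv_iff, ← cs.inv_mul_simple_inv u i, inv_inv]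
  refine cs.bruhat_descent_of_le_mul i
    (by rw [cs.length_inv_mul_simple, cs.length_inv]; exact hvi) ?_
  rw [show v⁻¹ * σ i = (σ i * v)⁻¹ by rw [mul_inv_rev, cs.inv_simple]]
  exact bruhatLE.inv cs hu

end CoxeterSystem


/-- If `ω = s_1 ⋯ s_n` is a good word of `w` for `x` with `λ_{x,ω} = (i_1, …, i_d)` and
`i_1 > 1` (0-based: `0 ∉ λ_{x,ω}`), then `S(s_1 x, s_1 w) = S(x, w)`. -/
theorem good_word_bnSet_eq (cs : CoxeterSystem M W) (ω : List B) (w x : W)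
    (hne : ω ≠ [])
    (hred : cs.IsReduced ω) (hw : cs.wordProd ω = w) (hxw : cs.bruhatLE x w)
    (hgood : cs.wordProd (delIdxs ω (cs.lambdaList x ω)) = x)
    (h1 : 0 ∉ cs.lambdaList x ω) :
    cs.bnSet (cs.simple (ω.head hne) * x) (cs.simple (ω.head hne) * w) = cs.bnSet x w := by
  classical
  set i0 := ω.head hne with hi0
  have hn : 0 < ω.length := List.length_pos_iff.mpr hne
  have hsw : cs.simple i0 * w = cs.wordProd ω.tail := by
    conv_lhs => rw [← hw, ← List.cons_head_tail hne]
    rw [CoxeterSystem.wordProd_cons, ← mul_assoc, cs.simple_mul_simple_self, one_mul]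
  have hlw : cs.length w = ω.length := by rw [← hw]; exact hred
  have hlsw : cs.length (cs.simple i0 * w) < cs.length w := by
    rw [hsw, hlw]
    calc cs.length (cs.wordProd ω.tail) ≤ ω.tail.length := cs.length_wordProd_le _
      _ = ω.length - 1 := List.length_tail
      _ < ω.length := by omega
  have hnotle : ¬ cs.bruhatLE x (cs.simple i0 * w) := by
    intro hcon
    apply h1
    unfold CoxeterSystem.lambdaList
    refine List.mem_filter.mpr ⟨List.mem_range.mpr hn, ?_⟩
    rw [decide_eq_true_eq, List.eraseIdx_zero, ← hsw]
    exact hcon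
  have hlx : cs.length (cs.simple i0 * x) < cs.length x := by
    rcases (cs.length_simple_mul_ne x i0).lt_or_gt with h | h
    · exact h
    · exact absurd (cs.bruhat_left_descent_le_mul i0 hlsw hxw h) hnotle
  have hsimp2 : ∀ y : W, cs.simple i0 * (cs.simple i0 * y) = y := by
    intro y
    rw [← mul_assoc, cs.simple_mul_simple_self, one_mul]
  have hlen_eq : ∀ y : W, cs.length (cs.simple i0 * y) < cs.length y →
      cs.length (cs.simple i0 * y) + 1 = cs.length y := by
    intro y hy
    rcases cs.length_simple_mul y i0 with h | h <;> omega
  have hlen_eq' : ∀ y : W, cs.length y < cs.length (cs.simple i0 * y) →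
      cs.length (cs.simple i0 * y) = cs.length y + 1 := by
    intro y hy
    rcases cs.length_simple_mul y i0 with h | h <;> omega
  ext t
  simp only [CoxeterSystem.bnSet, Set.mem_setOf_eq]
  constructor
  · rintro ⟨ht, hle1, hlt1⟩
    obtain ⟨hlt1le, hlt1len⟩ := (cs.bruhatLT_iff).mp hlt1
    rw [mul_assoc] at hle1 hlt1le hlt1len
    rcases (cs.length_simple_mul_ne (w * t) i0).lt_or_gt with hc | hc
    · -- good case : ℓ (s (w t)) < ℓ (w t)
      refine ⟨ht, ?_, ?_⟩
      · have := cs.bruhat_left_descent_of_le_mul i0 (v := w * t) hc hle1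
        rwa [hsimp2] at this
      · have hwtw : cs.bruhatLE (w * t) w := by
          have h2 := cs.bruhat_left_descent_of_le_mul i0 (v := w) hlsw
            (u := cs.simple i0 * (w * t)) hlt1le
          rwa [hsimp2] at h2
        refine (cs.bruhatLT_iff).mpr ⟨hwtw, ?_⟩
        have e1 := hlen_eq (w * t) hc
        have e2 := hlen_eq w hlsw
        omega
    · -- impossible case : ℓ (w t) < ℓ (s (w t))
      exfalso
      have hx_swt : cs.bruhatLE x (cs.simple i0 * (w * t)) := by
        have := cs.bruhat_left_descent_mul_le i0 (v := cs.simple i0 * (w * t))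
          (by rw [hsimp2]; exact hc) hle1
        rwa [hsimp2] at this
      exact hnotle (CoxeterSystem.bruhatLE.trans cs hx_swt hlt1le)
  · rintro ⟨ht, hle1, hlt1⟩
    obtain ⟨hlt1le, hlt1len⟩ := (cs.bruhatLT_iff).mp hlt1
    rcases (cs.length_simple_mul_ne (w * t) i0).lt_or_gt with hc | hc
    · -- good case
      refine ⟨ht, ?_, ?_⟩
      · have := cs.bruhat_left_descent_mul_le_mul i0 (v := w * t) hc hle1 hlx
        rwa [← mul_assoc] at this
      · have hle2 : cs.bruhatLE (cs.simple i0 * (w * t)) (cs.simple i0 * w) :=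
          cs.bruhat_left_descent_mul_le_mul i0 (v := w) hlsw hlt1le hc
        rw [← mul_assoc] at hle2
        refine (cs.bruhatLT_iff).mpr ⟨hle2, ?_⟩
        have e1 := hlen_eq (w * t) hc
        have e2 := hlen_eq w hlsw
        rw [mul_assoc]
        omega
    · -- impossible case
      exfalso
      have hwt_sw : cs.bruhatLE (w * t) (cs.simple i0 * w) :=
        cs.bruhat_left_descent_le_mul i0 (v := w) hlsw hlt1le hc
      exact hnotle (CoxeterSystem.bruhatLE.trans cs hle1 hwt_sw)
end
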